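/- Let (G,X) be a strongly marked group with Property D. For all subsets Y, Y' ⊆ X, the intersection of standard parabolic subgroups satisfies G_Y ∩ G_{Y'} = G_{Y ∩ Y'}. -/

import Mathlib

namespace Paper

/-- The alternating list `(a, b, a, b, ...)` of length `m`. -/
def altList {α : Type*} (a b : α) : ℕ → List α
  | 0 => []
  | n + 1 => a :: altList b a n

/-- The alternating product `a b a ⋯` of length `m` in a monoid. -/
def altProd {G : Type*} [Monoid G] (a b : G) (m : ℕ) : G := (altList a b m).prod

variable {G : Type*} [Group G]

/-- The set of syllables of a generating set `X`: nontrivial powers of elements of `X`. -/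
def Syll (X : Set G) : Set G := {s | ∃ x ∈ X, ∃ a : ℤ, s = x ^ a ∧ s ≠ 1}

/-- A syllabic word: a list all of whose entries are syllables. -/
def SylWord (X : Set G) (w : List G) : Prop := ∀ s ∈ w, s ∈ Syll X

/-- The syllabic length of an element: minimal length of a syllabic word representing it. -/
noncomputable def sylLen (X : Set G) (g : G) : ℕ :=
  sInf {n | ∃ w : List G, SylWord X w ∧ w.prod = g ∧ w.length = n}

/-- A syllabic word is reduced if its length is the syllabic length of the element
it represents. -/
def Reduced (X : Set G) (w : List G) : Prop :=
  SylWord X w ∧ w.length = sylLen X w.prod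

/-- Elementary M-operation of type I. -/
def MOpI (X : Set G) (w w' : List G) : Prop :=
  ∃ (w₁ w₂ : List G) (s t : G), s ∈ Syll X ∧ t ∈ Syll X ∧
    w = w₁ ++ [s, t] ++ w₂ ∧
    ((s * t ∈ Syll X ∧ w' = w₁ ++ [s * t] ++ w₂) ∨ (s * t = 1 ∧ w' = w₁ ++ w₂))

/-- Elementary M-operation of type II. -/
def MOpII (X : Set G) (w w' : List G) : Prop :=
  ∃ (w₁ w₂ : List G) (s t : G) (m : ℕ), s ∈ Syll X ∧ t ∈ Syll X ∧ 2 ≤ m ∧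
    altProd s t m = altProd t s m ∧ sylLen X (altProd s t m) = m ∧
    w = w₁ ++ altList s t m ++ w₂ ∧ w' = w₁ ++ altList t s m ++ w₂

/-- Elementary M-operation (of type I or type II). -/
def MOp (X : Set G) (w w' : List G) : Prop := MOpI X w w' ∨ MOpII X w w'

/-- A syllabic word is M-reduced if its length cannot be shortened by any finite
sequence of elementary M-operations. -/
def MReduced (X : Set G) (w : List G) : Prop :=
  ∀ w', Relation.ReflTransGen (MOp X) w w' → ¬ w'.length < w.length

/-- Property D: a syllabic word is reduced iff it is M-reduced, and any two reduced
syllabic words representing the same element are connected by a finite sequence of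
elementary M-operations of type II. -/
def PropertyD (X : Set G) : Prop :=
  (∀ w : List G, SylWord X w → (Reduced X w ↔ MReduced X w)) ∧
  (∀ w w' : List G, Reduced X w → Reduced X w' → w.prod = w'.prod →
    Relation.ReflTransGen (MOpII X) w w')

/-- `(G, X)` is a marked group: `X` generates `G`. -/
def Marked (X : Set G) : Prop := Subgroup.closure X = ⊤

/-- `(G, X)` is a strongly marked group. -/
def StronglyMarked (X : Set G) : Prop :=
  Marked X ∧ (1 : G) ∉ X ∧
    ∀ x ∈ X, ∀ y ∈ X, ∀ a b : ℤ, x ^ a ≠ 1 → y ^ b ≠ 1 →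
      (x ^ a * y ^ b ∈ Syll X ∨ x ^ a * y ^ b = 1) → x = y

/-- The data of a Dyer graph: a simplicial graph with edge labels `m ≥ 2` and vertex
labels `f ∈ ℕ_{≥2} ∪ {∞}` such that any edge with `m(e) ≠ 2` has both endpoints
labelled `2`. -/
structure DyerData (V : Type*) where
  adj : V → V → Prop
  symm : ∀ u v, adj u v → adj v u
  loopless : ∀ v, ¬ adj v v
  m : V → V → ℕ
  m_symm : ∀ u v, m u v = m v u
  m_two_le : ∀ u v, adj u v → 2 ≤ m u v
  f : V → ℕ∞
  f_two_le : ∀ v, 2 ≤ f v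
  dyer : ∀ u v, adj u v → m u v ≠ 2 → f u = 2 ∧ f v = 2

/-- The defining relators of the Dyer group of `Δ`. -/
def DyerData.rels {V : Type*} (Δ : DyerData V) : Set (FreeGroup V) :=
  {r | ∃ v, Δ.f v ≠ ⊤ ∧ r = (FreeGroup.of v) ^ (Δ.f v).toNat} ∪
  {r | ∃ u v, Δ.adj u v ∧
    r = altProd (FreeGroup.of u) (FreeGroup.of v) (Δ.m u v) *
        (altProd (FreeGroup.of v) (FreeGroup.of u) (Δ.m u v))⁻¹}

/-- The Dyer group of the data `Δ`. -/
abbrev DyerGroup {V : Type*} (Δ : DyerData V) := PresentedGroup Δ.rels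

/-- The standard generating set of a Dyer group. -/
def DyerGens {V : Type*} (Δ : DyerData V) : Set (DyerGroup Δ) :=
  Set.range (PresentedGroup.of (rels := Δ.rels))


/-- A word over `Y`: every entry is a nontrivial power of an element of `Y`. -/
def OverWord (Y : Set G) (w : List G) : Prop :=
  ∀ s ∈ w, ∃ x ∈ Y, ∃ a : ℤ, s = x ^ a ∧ s ≠ 1

lemma OverWord.sylWord {X Y : Set G} (hY : Y ⊆ X) {w : List G}
    (h : OverWord Y w) : SylWord X w := by
  intro s hs
  obtain ⟨x, hx, a, h1, h2⟩ := h s hs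
  exact ⟨x, hY hx, a, h1, h2⟩

lemma base_unique {X : Set G} (hSM : StronglyMarked X) {x y : G}
    (hx : x ∈ X) (hy : y ∈ X) {a b : ℤ} (hne : x ^ a ≠ 1) (h : x ^ a = y ^ b) :
    x = y := by
  have hby : y ^ (-b) ≠ 1 := by
    intro hb
    apply hne
    rw [h, ← inv_inj, ← zpow_neg, hb, inv_one]
  refine hSM.2.2 x hx y hy a (-b) hne hby (Or.inr ?_)
  rw [h, ← zpow_add, add_neg_cancel, zpow_zero]

lemma mem_altList {α : Type*} {a b c : α} : ∀ {m : ℕ}, c ∈ altList a b m → c = a ∨ c = b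
  | 0, h => by simp [altList] at h
  | n + 1, h => by
    rw [altList, List.mem_cons] at h
    rcases h with h | h
    · exact Or.inl h
    · exact (mem_altList h).symm

lemma self_mem_altList {α : Type*} {a b : α} : ∀ {m : ℕ}, 1 ≤ m → a ∈ altList a b m
  | 0, h => absurd h (by omega)
  | _ + 1, _ => by rw [altList]; exact List.mem_cons_self

lemma snd_mem_altList {α : Type*} {a b : α} : ∀ {m : ℕ}, 2 ≤ m → b ∈ altList a b m
  | 0, h => absurd h (by omega)
  | 1, h => absurd h (by omega)
  | n + 2, _ => by
    rw [altList]
    exact List.mem_cons_of_mem _ (self_mem_altList (by omega))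

lemma mop_prod {X : Set G} {w w' : List G} (h : MOp X w w') : w'.prod = w.prod := by
  rcases h with ⟨w₁, w₂, s, t, _, _, rfl, (⟨_, rfl⟩ | ⟨hst, rfl⟩)⟩ | ⟨w₁, w₂, s, t, m, _, _, _, hcomm, _, rfl, rfl⟩
  · simp [mul_assoc]
  · simp [mul_assoc, ← mul_assoc s t, hst]
  · simp only [List.prod_append]
    rw [show (altList t s m).prod = (altList s t m).prod from hcomm.symm]

lemma mop_over {X Y : Set G} (hSM : StronglyMarked X) (hY : Y ⊆ X)
    {w w' : List G} (h : MOp X w w') (hw : OverWord Y w) : OverWord Y w' := by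
  rcases h with ⟨w₁, w₂, s, t, _, _, hw0, hcase⟩ | ⟨w₁, w₂, s, t, m, _, _, hm, _, _, hw0, rfl⟩
  · have hs : ∃ x ∈ Y, ∃ a : ℤ, s = x ^ a ∧ s ≠ 1 := hw s (by simp [hw0])
    have ht : ∃ x ∈ Y, ∃ a : ℤ, t = x ^ a ∧ t ≠ 1 := hw t (by simp [hw0])
    obtain ⟨x, hxY, a, rfl, hs1⟩ := hs
    obtain ⟨y, hyY, b, rfl, ht1⟩ := ht
    rcases hcase with ⟨hsyll, rfl⟩ | ⟨_, rfl⟩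
    · intro u hu
      simp only [List.mem_append, List.mem_singleton] at hu
      rcases hu with (hu | rfl) | hu
      · exact hw u (by simp [hw0, hu])
      · have hxy : x = y := hSM.2.2 x (hY hxY) y (hY hyY) a b hs1 ht1 (Or.inl hsyll)
        subst hxy
        obtain ⟨z, _, c, hzc, hne⟩ := hsyll
        exact ⟨x, hxY, a + b, by rw [zpow_add], hne⟩
      · exact hw u (by simp [hw0, hu])
    · intro u hu
      simp only [List.mem_append] at hu
      rcases hu with hu | hu
      · exact hw u (by simp [hw0, hu])
      · exact hw u (by simp [hw0, hu])
  · intro u hu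
    have hsw : s ∈ w := by
      rw [hw0]
      exact List.mem_append_left _ (List.mem_append_right _ (self_mem_altList (by omega)))
    have htw : t ∈ w := by
      rw [hw0]
      exact List.mem_append_left _ (List.mem_append_right _ (snd_mem_altList hm))
    simp only [List.mem_append] at hu
    rcases hu with (hu | hu) | hu
    · exact hw u (by rw [hw0]; simp [hu])
    · rcases mem_altList hu with h | h <;> subst h
      · exact hw _ htw
      · exact hw _ hsw
    · exact hw u (by rw [hw0]; simp [hu])

lemma mops_prod_over {X Y : Set G} (hSM : StronglyMarked X) (hY : Y ⊆ X)
    {w w' : List G} (h : Relation.ReflTransGen (MOp X) w w') (hw : OverWord Y w) :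
    w'.prod = w.prod ∧ OverWord Y w' := by
  induction h with
  | refl => exact ⟨rfl, hw⟩
  | tail _ hstep ih => exact ⟨(mop_prod hstep).trans ih.1, mop_over hSM hY hstep ih.2⟩

lemma exists_reduced_over {X Y : Set G} (hSM : StronglyMarked X) (hPD : PropertyD X)
    (hY : Y ⊆ X) {g : G} (hg : g ∈ Subgroup.closure Y) :
    ∃ w : List G, OverWord Y w ∧ Reduced X w ∧ w.prod = g := by
  -- step 1: some word over Y with product g
  have h1 : ∃ w : List G, OverWord Y w ∧ w.prod = g := by
    rw [← Subgroup.mem_toSubmonoid, Subgroup.closure_toSubmonoid] at hg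
    obtain ⟨l, hl, rfl⟩ := Submonoid.exists_list_of_mem_closure hg
    refine ⟨l, ?_, rfl⟩
    intro s hs
    rcases hl s hs with hs' | hs'
    · exact ⟨s, hs', 1, by simp, fun h => hSM.2.1 (h ▸ hY hs')⟩
    · have hsY : s⁻¹ ∈ Y := Set.mem_inv.mp hs'
      refine ⟨s⁻¹, hsY, -1, by simp, fun h => ?_⟩
      apply hSM.2.1
      rw [show (1 : G) = s⁻¹ by rw [h, inv_one]]
      exact hY hsY
  -- step 2: minimal length word over Y with product g is reduced
  set S : Set ℕ := {n | ∃ w : List G, OverWord Y w ∧ w.prod = g ∧ w.length = n} with hS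
  have hSne : S.Nonempty := by
    obtain ⟨w, hw, hwp⟩ := h1
    exact ⟨w.length, w, hw, hwp, rfl⟩
  obtain ⟨w, hw, hwp, hwl⟩ := Nat.sInf_mem hSne
  have hsyl : SylWord X w := hw.sylWord hY
  have hmred : MReduced X w := by
    intro w'' hchain hlt
    obtain ⟨hp, ho⟩ := mops_prod_over hSM hY hchain hw
    have : w''.length ∈ S := ⟨w'', ho, hp.trans hwp, rfl⟩
    exact absurd (Nat.sInf_le this) (by omega)
  exact ⟨w, hw, (hPD.1 w hsyl).mpr hmred, hwp⟩

theorem statement_8 {G : Type*} [Group G] {X : Set G}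
    (hSM : StronglyMarked X) (hPD : PropertyD X)
    (Y Y' : Set G) (hY : Y ⊆ X) (hY' : Y' ⊆ X) :
    Subgroup.closure Y ⊓ Subgroup.closure Y' = Subgroup.closure (Y ∩ Y') := by
  refine le_antisymm ?_ (le_inf (Subgroup.closure_mono Set.inter_subset_left)
    (Subgroup.closure_mono Set.inter_subset_right))
  intro g hg
  obtain ⟨w, hwo, hwr, hwp⟩ := exists_reduced_over hSM hPD hY hg.1
  obtain ⟨w', hwo', hwr', hwp'⟩ := exists_reduced_over hSM hPD hY' hg.2
  have hchain : Relation.ReflTransGen (MOpII X) w w' :=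
    hPD.2 w w' hwr hwr' (hwp.trans hwp'.symm)
  have hchain' : Relation.ReflTransGen (MOp X) w w' := Relation.ReflTransGen.mono (p := MOp X) (fun _ _ h => Or.inr h) w w' hchain
  have hwo'' : OverWord Y w' := (mops_prod_over hSM hY hchain' hwo).2
  rw [← hwp']
  refine Subgroup.list_prod_mem _ fun s hs => ?_
  obtain ⟨x, hxY, a, rfl, hne⟩ := hwo'' s hs
  obtain ⟨y, hyY', b, heq, _⟩ := hwo' _ hs
  have hxy : x = y := base_unique hSM (hY hxY) (hY' hyY') hne heq
  exact zpow_mem (Subgroup.subset_closure (show x ∈ Y ∩ Y' from ⟨hxY, hxy ▸ hyY'⟩)) a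

end Paper
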